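/- In a Cartesian closed differential category with a parametrized fixpoint operator fix and induced fixpoint combinator Y_X := fix(eval_{X,X}), the operator fix satisfies the differential-fixpoint rule for all maps if and only if D[Y_X] = π₂ ∘ Y_{T X} ∘ λ(T(eval_{X,X}) ∘ c) holds for all objects X. -/

import Mathlib

open CategoryTheory CategoryTheory.Limits

universe v u

variable (C : Type u) [Category.{v} C] [HasFiniteProducts C]

/-- Cartesian left additive category: hom-sets are commutative monoids,
precomposition is additive, and the projections are additive maps. -/
class CartesianLeftAdditive [∀ A B : C, AddCommMonoid (A ⟶ B)] : Prop where
  comp_add : ∀ {X A B : C} (x : X ⟶ A) (f g : A ⟶ B), x ≫ (f + g) = x ≫ f + x ≫ g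
  comp_zero : ∀ {X A B : C} (x : X ⟶ A), x ≫ (0 : A ⟶ B) = 0
  add_comp_fst : ∀ {X A B : C} (x y : X ⟶ A ⨯ B),
    (x + y) ≫ (prod.fst : A ⨯ B ⟶ A) = x ≫ prod.fst + y ≫ prod.fst
  add_comp_snd : ∀ {X A B : C} (x y : X ⟶ A ⨯ B),
    (x + y) ≫ (prod.snd : A ⨯ B ⟶ B) = x ≫ prod.snd + y ≫ prod.snd
  zero_comp_fst : ∀ {X A B : C}, (0 : X ⟶ A ⨯ B) ≫ (prod.fst : A ⨯ B ⟶ A) = 0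
  zero_comp_snd : ∀ {X A B : C}, (0 : X ⟶ A ⨯ B) ≫ (prod.snd : A ⨯ B ⟶ B) = 0

/-- A differential combinator satisfying the axioms [CD.1]-[CD.7] of a
Cartesian differential category. -/
structure DiffComb [∀ A B : C, AddCommMonoid (A ⟶ B)] where
  D : ∀ {A B : C}, (A ⟶ B) → (A ⨯ A ⟶ B)
  cd1_zero : ∀ {A B : C}, D (0 : A ⟶ B) = 0
  cd1_add : ∀ {A B : C} (f g : A ⟶ B), D (f + g) = D f + D g
  cd2_zero : ∀ {A B X : C} (f : A ⟶ B) (x : X ⟶ A), prod.lift x 0 ≫ D f = 0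
  cd2_add : ∀ {A B X : C} (f : A ⟶ B) (x y z : X ⟶ A),
    prod.lift x (y + z) ≫ D f = prod.lift x y ≫ D f + prod.lift x z ≫ D f
  cd3_id : ∀ {A : C}, D (𝟙 A) = prod.snd
  cd3_fst : ∀ {A B : C},
    D (prod.fst : A ⨯ B ⟶ A) = (prod.snd : (A ⨯ B) ⨯ (A ⨯ B) ⟶ A ⨯ B) ≫ prod.fst
  cd3_snd : ∀ {A B : C},
    D (prod.snd : A ⨯ B ⟶ B) = (prod.snd : (A ⨯ B) ⨯ (A ⨯ B) ⟶ A ⨯ B) ≫ prod.snd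
  cd4 : ∀ {A B B' : C} (f : A ⟶ B) (g : A ⟶ B'), D (prod.lift f g) = prod.lift (D f) (D g)
  cd5 : ∀ {A B E : C} (f : A ⟶ B) (g : B ⟶ E), D (f ≫ g) = prod.lift (prod.fst ≫ f) (D f) ≫ D g
  cd6 : ∀ {A B X : C} (f : A ⟶ B) (x y z : X ⟶ A),
    prod.lift (prod.lift x y) (prod.lift 0 z) ≫ D (D f) = prod.lift x z ≫ D f
  cd7 : ∀ {A B X : C} (f : A ⟶ B) (x y z : X ⟶ A),
    prod.lift (prod.lift x y) (prod.lift z 0) ≫ D (D f) =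
      prod.lift (prod.lift x z) (prod.lift y 0) ≫ D (D f)

variable {C}

/-- The tangent bundle functor on maps: `T f = ⟨f ∘ π₁, D[f]⟩`. -/
noncomputable def DiffComb.T [∀ A B : C, AddCommMonoid (A ⟶ B)] (Dc : DiffComb C) {A B : C}
    (f : A ⟶ B) : A ⨯ A ⟶ B ⨯ B :=
  prod.lift (prod.fst ≫ f) (Dc.D f)

/-- The canonical middle-swap isomorphism `c = ⟨π₁,π₃,π₂,π₄⟩`. -/
noncomputable def cmap (A B X Y : C) : (A ⨯ B) ⨯ (X ⨯ Y) ⟶ (A ⨯ X) ⨯ (B ⨯ Y) :=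
  prod.lift (prod.map prod.fst prod.fst) (prod.map prod.snd prod.snd)

/-- A parametrized fixpoint operator. -/
structure ParamFix (C : Type u) [Category.{v} C] [HasFiniteProducts C] where
  fix : ∀ {A X : C}, (A ⨯ X ⟶ X) → (A ⟶ X)
  fix_eq : ∀ {A X : C} (f : A ⨯ X ⟶ X), prod.lift (𝟙 A) (fix f) ≫ f = fix f
  natural : ∀ {A B X : C} (g : A ⟶ B) (f : B ⨯ X ⟶ X),
    g ≫ fix f = fix (prod.map g (𝟙 X) ≫ f)

/-- A (chosen) Cartesian closed structure: internal homs, evaluation maps and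
currying. -/
structure ClosedStruct (C : Type u) [Category.{v} C] [HasFiniteProducts C] where
  ihom : C → C → C
  ev : ∀ (X Y : C), ihom X Y ⨯ X ⟶ Y
  curry : ∀ {A X Y : C}, (A ⨯ X ⟶ Y) → (A ⟶ ihom X Y)
  curry_eq : ∀ {A X Y : C} (f : A ⨯ X ⟶ Y), prod.map (curry f) (𝟙 X) ≫ ev X Y = f
  curry_unique : ∀ {A X Y : C} (g : A ⟶ ihom X Y) (f : A ⨯ X ⟶ Y),
    prod.map g (𝟙 X) ≫ ev X Y = f → g = curry f

/-- The tangent functor preserves composition. -/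
theorem DiffComb.T_comp [∀ A B : C, AddCommMonoid (A ⟶ B)] (Dc : DiffComb C)
    {A B E : C} (f : A ⟶ B) (g : B ⟶ E) :
    Dc.T (f ≫ g) = Dc.T f ≫ Dc.T g := by
  simp [DiffComb.T, Dc.cd5, prod.comp_lift, Category.assoc, prod.lift_fst, prod.lift_snd,
    prod.lift_fst_assoc, prod.lift_snd_assoc]

/-- `T` is strong monoidal w.r.t. the middle-swap map, in the special case of
`f × id`. -/
theorem DiffComb.T_swap [∀ A B : C, AddCommMonoid (A ⟶ B)] (Dc : DiffComb C)
    {A B : C} (f : A ⟶ B) (Z : C) :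
    prod.map (Dc.T f) (𝟙 (Z ⨯ Z)) ≫ cmap B B Z Z =
      cmap A A Z Z ≫ Dc.T (prod.map f (𝟙 Z)) := by
  have hmap : (prod.map f (𝟙 Z) : A ⨯ Z ⟶ B ⨯ Z) =
      prod.lift (prod.fst ≫ f) prod.snd := by
    apply Limits.prod.hom_ext <;> simp [prod.lift_fst, prod.lift_snd, prod.lift_fst_assoc, prod.lift_snd_assoc]
  have hD : Dc.D (prod.map f (𝟙 Z)) =
      prod.lift (prod.lift (prod.fst ≫ prod.fst) (prod.snd ≫ prod.fst) ≫ Dc.D f)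
        (prod.snd ≫ prod.snd) := by
    rw [hmap, Dc.cd4, Dc.cd5, Dc.cd3_fst, Dc.cd3_snd]
  apply Limits.prod.hom_ext
  · apply Limits.prod.hom_ext <;>
      simp [cmap, DiffComb.T, hD, prod.comp_lift, Category.assoc, prod.lift_fst, prod.lift_snd, prod.lift_fst_assoc, prod.lift_snd_assoc]
  · apply Limits.prod.hom_ext
    · simp only [cmap, DiffComb.T, hD, prod.comp_lift, Category.assoc, prod.lift_fst,
        prod.lift_snd, prod.map_fst, prod.map_snd, prod.map_map, Category.comp_id,
        Category.id_comp]
      have key : prod.lift (prod.map (prod.fst : A ⨯ A ⟶ A) (prod.fst : Z ⨯ Z ⟶ Z))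
            (prod.map prod.snd prod.snd) ≫
          prod.lift (prod.fst ≫ prod.fst) (prod.snd ≫ prod.fst) = prod.fst := by
        apply Limits.prod.hom_ext <;> simp [prod.lift_fst, prod.lift_snd, prod.lift_fst_assoc, prod.lift_snd_assoc]
      rw [← Category.assoc, key]
    · simp [cmap, DiffComb.T, hD, prod.comp_lift, Category.assoc, prod.lift_fst, prod.lift_snd, prod.lift_fst_assoc, prod.lift_snd_assoc]

/-- `fix f = curry f ≫ Y`. -/
theorem ParamFix.fix_curry (P : ParamFix C) (Cl : ClosedStruct C)
    {A X : C} (f : A ⨯ X ⟶ X) :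
    Cl.curry f ≫ P.fix (Cl.ev X X) = P.fix f := by
  rw [P.natural, Cl.curry_eq]

/-- in a Cartesian closed differential category with a
parametrized fixpoint operator `fix` and fixpoint combinator `Y_X = fix(ev)`,
`fix` satisfies the differential-fixpoint rule for all maps iff
`D[Y_X] = π₂ ∘ Y_{TX} ∘ λ(T(ev) ∘ c)` for all objects `X`. -/
theorem closed_diff_fix_iff_combinator_rule
    [∀ A B : C, AddCommMonoid (A ⟶ B)] [CartesianLeftAdditive C]
    (Dc : DiffComb C) (Cl : ClosedStruct C) (P : ParamFix C)
    (hev_lin : ∀ {X Y Z : C} (h k : Z ⟶ Cl.ihom X Y) (x : Z ⟶ X),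
      prod.lift (prod.lift h x) (prod.lift k 0) ≫ Dc.D (Cl.ev X Y) =
        prod.lift k x ≫ Cl.ev X Y) :
    (∀ {A X : C} (f : A ⨯ X ⟶ X),
      Dc.D (P.fix f) = P.fix (cmap A A X X ≫ Dc.T f) ≫ prod.snd) ↔
    (∀ X : C,
      Dc.D (P.fix (Cl.ev X X)) =
        Cl.curry (cmap (Cl.ihom X X) (Cl.ihom X X) X X ≫ Dc.T (Cl.ev X X)) ≫
          P.fix (Cl.ev (X ⨯ X) (X ⨯ X)) ≫ prod.snd) := by
  constructor
  · intro h X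
    rw [h (Cl.ev X X), ← P.fix_curry Cl (cmap (Cl.ihom X X) (Cl.ihom X X) X X ≫
      Dc.T (Cl.ev X X)), Category.assoc]
  · intro h A X f
    have hfix : P.fix f = Cl.curry f ≫ P.fix (Cl.ev X X) :=
      (P.fix_curry Cl f).symm
    rw [hfix, Dc.cd5, h X]
    have : prod.lift (prod.fst ≫ Cl.curry f) (Dc.D (Cl.curry f)) = Dc.T (Cl.curry f) := rfl
    rw [this, ← Category.assoc, ← Category.assoc]
    congr 1
    rw [Category.assoc, P.natural, P.natural]
    congr 1
    rw [Cl.curry_eq, ← Category.assoc, Dc.T_swap, Category.assoc,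
      ← Dc.T_comp, Cl.curry_eq]
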